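/- For every β ∈ (0,1) there exists R₀ > 0 such that for all λ > 0 and all Γ_C, Γ_N > 0 with Γ_N/Γ_C ≥ R₀ the following holds. Set σ = (Γ_C/Γ_N)², define G(c₂) = 4Γ_C² β^{2λc₂−1}/λ² + 4Γ_N² (1 − β^{2λc₂−1}) c₂²/(2λc₂ − 1) for c₂ with 0 < 2λc₂ < 1, and let G* = inf of G over {c₂ : 0 < 2λc₂ < 1}. Then G* ≥ (4Γ_C²/(λ²β)) · β^{8σ/β} and G* ≤ (4Γ_C²/(λ²β)) · β^{σ} · (1 + σ·log(1/β)/4). In particular G* is strictly smaller than 4Γ_C²/(λ²β), the bound obtained from using the clean data alone. -/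

import Mathlib

lemma aux_exp1 (u : ℝ) : Real.exp u - 1 ≤ u * Real.exp u := by
  have h2 : Real.exp (-u) * Real.exp u = 1 := by rw [← Real.exp_add]; simp
  nlinarith [Real.add_one_le_exp (-u), Real.exp_pos u]

lemma aux_exp2 (a c : ℝ) (h : a ≤ c) : Real.exp c - Real.exp a ≤ (c - a) * Real.exp c := by
  have h2 : Real.exp (a - c) * Real.exp c = Real.exp a := by rw [← Real.exp_add]; ring_nf
  nlinarith [Real.add_one_le_exp (a - c), Real.exp_pos c]

set_option maxHeartbeats 1000000 in
lemma lower_x (β ΓC ΓN x : ℝ) (hβ0 : 0 < β) (hβ1 : β < 1) (hC : 0 < ΓC) (hN : 0 < ΓN)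
    (hx0 : 0 < x) (hx1 : x < 1) :
    ΓC ^ 2 * β ^ (8 * (ΓC / ΓN) ^ 2 / β - 1) ≤
      ΓC ^ 2 * β ^ (x - 1) + ΓN ^ 2 * (β ^ (x - 1) - 1) * x ^ 2 / (4 * (1 - x)) := by
  obtain ⟨s, hs⟩ : ∃ s : ℝ, s = 8 * (ΓC / ΓN) ^ 2 / β := ⟨_, rfl⟩
  rw [← hs]
  have hs0 : 0 < s := by rw [hs]; positivity
  have hB1 : (1:ℝ) ≤ β ^ (x - 1) := by
    have := Real.rpow_le_rpow_of_exponent_ge hβ0 hβ1.le (by linarith : x - 1 ≤ 0)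
    simpa using this
  have hsecond : 0 ≤ ΓN ^ 2 * (β ^ (x - 1) - 1) * x ^ 2 / (4 * (1 - x)) := by
    apply div_nonneg _ (by linarith)
    have : (0:ℝ) ≤ β ^ (x-1) - 1 := by linarith
    positivity
  rcases le_or_gt x s with hcase | hcase
  · have h1 : β ^ (s - 1) ≤ β ^ (x - 1) :=
      Real.rpow_le_rpow_of_exponent_ge hβ0 hβ1.le (by linarith)
    nlinarith [sq_nonneg ΓC]
  · -- x > s
    have hlog : Real.log β < 0 := Real.log_neg hβ0 hβ1
    obtain ⟨L, hL⟩ : ∃ L : ℝ, L = -Real.log β := ⟨_, rfl⟩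
    have hL0 : 0 < L := by rw [hL]; linarith
    have hBx : β ^ (x - 1) = Real.exp ((1 - x) * L) := by
      rw [Real.rpow_def_of_pos hβ0, hL]; ring_nf
    have hBs : β ^ (s - 1) = Real.exp ((1 - s) * L) := by
      rw [Real.rpow_def_of_pos hβ0, hL]; ring_nf
    have hβe : β = Real.exp (-L) := by
      rw [hL, neg_neg, Real.exp_log hβ0]
    -- B - 1 ≥ (1-x) L
    have h1 : (1 - x) * L + 1 ≤ β ^ (x - 1) := by
      rw [hBx]; exact Real.add_one_le_exp _
    -- β * (Bs - B) ≤ (x - s) * L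
    have h2 : β * (β ^ (s - 1) - β ^ (x - 1)) ≤ (x - s) * L := by
      have hac : (1 - x) * L ≤ (1 - s) * L := by nlinarith
      have := aux_exp2 ((1 - x) * L) ((1 - s) * L) hac
      have hmul : β * (β ^ (s-1) - β ^ (x-1)) ≤ β * (((1-s)*L - (1-x)*L) * Real.exp ((1-s)*L)) := by
        rw [hBx, hBs]
        exact mul_le_mul_of_nonneg_left this hβ0.le
      have hq : β * Real.exp ((1-s)*L) = Real.exp (-(s*L)) := by
        rw [hβe, ← Real.exp_add]; ring_nf
      have hq1 : Real.exp (-(s*L)) ≤ 1 := by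
        rw [Real.exp_le_one_iff]; nlinarith
      have hxs : (0:ℝ) ≤ ((1-s)*L - (1-x)*L) := by nlinarith
      calc β * (β ^ (s-1) - β ^ (x-1)) ≤ β * (((1-s)*L - (1-x)*L) * Real.exp ((1-s)*L)) := hmul
        _ = ((1-s)*L - (1-x)*L) * (β * Real.exp ((1-s)*L)) := by ring
        _ ≤ ((1-s)*L - (1-x)*L) * 1 := by
            rw [hq]; exact mul_le_mul_of_nonneg_left hq1 hxs
        _ = (x - s) * L := by ring
    -- polynomial fact
    have hσ : s * β * ΓN ^ 2 = 8 * ΓC ^ 2 := by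
      rw [hs]; field_simp
    have hpoly : 4 * ΓC ^ 2 * (x - s) ≤ β * ΓN ^ 2 * x ^ 2 := by
      nlinarith [mul_pos hβ0 (mul_pos (pow_pos hN 2) hx0), mul_nonneg (mul_nonneg hβ0.le (pow_pos hN 2).le) (mul_nonneg (by linarith : (0:ℝ) ≤ x - s) hx0.le)]
    -- main: ΓC² (Bs - B) ≤ ΓN² (B-1) x² / (4(1-x))
    rw [← sub_le_iff_le_add']
    have h4 : (0:ℝ) < 4 * (1 - x) := by linarith
    have p1 := mul_le_mul_of_nonneg_left h2
      (by nlinarith [pow_pos hC 2] : (0:ℝ) ≤ 4 * ΓC ^ 2 * (1 - x))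
    have p2 := mul_le_mul_of_nonneg_right hpoly
      (mul_nonneg hL0.le (by linarith) : (0:ℝ) ≤ L * (1 - x))
    have p3 := mul_le_mul_of_nonneg_left h1
      (by positivity : (0:ℝ) ≤ β * ΓN ^ 2 * x ^ 2)
    have key2 : β * (ΓC ^ 2 * (β ^ (s-1) - β ^ (x-1)) * (4 * (1-x))) ≤
        β * (ΓN ^ 2 * (β ^ (x-1) - 1) * x ^ 2) := by nlinarith [p1, p2, p3]
    have key : ΓC ^ 2 * (β ^ (s-1) - β ^ (x-1)) * (4 * (1-x)) ≤ ΓN ^ 2 * (β ^ (x-1) - 1) * x ^ 2 :=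
      le_of_mul_le_mul_left key2 hβ0
    calc ΓC ^ 2 * β ^ (s-1) - ΓC ^2 * β ^ (x-1) = ΓC ^2 * (β ^ (s-1) - β ^ (x-1)) := by ring
      _ ≤ ΓN ^ 2 * (β ^ (x-1) - 1) * x ^ 2 / (4*(1-x)) := by
          rw [le_div_iff₀ h4]; exact key

lemma upper_x (β ΓC ΓN : ℝ) (hβ0 : 0 < β) (hβ1 : β < 1) (hC : 0 < ΓC) (hN : 0 < ΓN)
    (hσ1 : (ΓC / ΓN) ^ 2 < 1) :
    ΓC ^ 2 * β ^ ((ΓC / ΓN) ^ 2 - 1) +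
      ΓN ^ 2 * (β ^ ((ΓC / ΓN) ^ 2 - 1) - 1) * ((ΓC / ΓN) ^ 2) ^ 2 / (4 * (1 - (ΓC / ΓN) ^ 2)) ≤
    ΓC ^ 2 * β ^ ((ΓC / ΓN) ^ 2 - 1) * (1 + (ΓC / ΓN) ^ 2 * Real.log (1 / β) / 4) := by
  obtain ⟨σ, hσv⟩ : ∃ σ : ℝ, σ = (ΓC / ΓN) ^ 2 := ⟨_, rfl⟩
  rw [← hσv] at hσ1 ⊢
  have hσ0 : 0 < σ := by rw [hσv]; positivity
  have hσrel : ΓN ^ 2 * σ = ΓC ^ 2 := by rw [hσv]; field_simp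
  have hlog : Real.log β < 0 := Real.log_neg hβ0 hβ1
  obtain ⟨L, hL⟩ : ∃ L : ℝ, L = Real.log (1 / β) := ⟨_, rfl⟩
  rw [← hL]
  have hL' : Real.log (1 / β) = -Real.log β := by rw [one_div, Real.log_inv]
  have hL0 : 0 < L := by rw [hL, hL']; linarith
  obtain ⟨B, hB⟩ : ∃ B : ℝ, B = β ^ (σ - 1) := ⟨_, rfl⟩
  rw [← hB]
  have hBe : B = Real.exp ((1 - σ) * L) := by
    rw [hB, Real.rpow_def_of_pos hβ0, hL, hL']; ring_nf
  have hBu : B - 1 ≤ (1 - σ) * L * B := by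
    rw [hBe]; exact aux_exp1 _
  have h4 : (0:ℝ) < 4 * (1 - σ) := by linarith
  have heq : ΓN ^ 2 * (B - 1) * σ ^ 2 = ΓC ^ 2 * σ * (B - 1) := by
    linear_combination (σ * (B - 1)) * hσrel
  have h : ΓN ^ 2 * (B - 1) * σ ^ 2 ≤ ΓC ^ 2 * B * σ * L * (1 - σ) := by
    have p := mul_le_mul_of_nonneg_left hBu (by positivity : (0:ℝ) ≤ ΓC ^ 2 * σ)
    nlinarith [p, heq]
  have h2 : ΓN ^ 2 * (B - 1) * σ ^ 2 / (4 * (1 - σ)) ≤ ΓC ^ 2 * B * σ * L / 4 := by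
    rw [div_le_iff₀ h4]; nlinarith [h]
  nlinarith [h2]

lemma strict_x (β σ : ℝ) (hβ0 : 0 < β) (hβ1 : β < 1) (hσ0 : 0 < σ) :
    β ^ σ * (1 + σ * Real.log (1 / β) / 4) < 1 := by
  have hlog : Real.log β < 0 := Real.log_neg hβ0 hβ1
  have hL' : Real.log (1 / β) = -Real.log β := by rw [one_div, Real.log_inv]
  obtain ⟨v, hv⟩ : ∃ v : ℝ, v = σ * (-Real.log β) := ⟨_, rfl⟩
  have hv0 : 0 < v := by rw [hv]; exact mul_pos hσ0 (by linarith)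
  have hexp : β ^ σ = Real.exp (-v) := by
    rw [Real.rpow_def_of_pos hβ0, hv]; ring_nf
  have hrw : β ^ σ * (1 + σ * Real.log (1 / β) / 4) = Real.exp (-v) * (1 + v / 4) := by
    rw [hexp, hL', hv]; try ring
  rw [hrw]
  have hprod : Real.exp (-v) * Real.exp v = 1 := by rw [← Real.exp_add]; simp
  nlinarith [Real.add_one_le_exp v, Real.exp_pos (-v), Real.exp_pos v,
    mul_pos hv0 (Real.exp_pos (-v)),
    mul_le_mul_of_nonneg_left (Real.add_one_le_exp v) (Real.exp_pos (-v)).le]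

lemma bridge18 (β ΓC ΓN lam c2 : ℝ) (hlam : 0 < lam) (hx1 : 2 * lam * c2 < 1) :
    4 * ΓC ^ 2 * β ^ (2 * lam * c2 - 1) / lam ^ 2 +
      4 * ΓN ^ 2 * (1 - β ^ (2 * lam * c2 - 1)) * c2 ^ 2 / (2 * lam * c2 - 1) =
    4 / lam ^ 2 * (ΓC ^ 2 * β ^ (2 * lam * c2 - 1) +
      ΓN ^ 2 * (β ^ (2 * lam * c2 - 1) - 1) * (2 * lam * c2) ^ 2 /
        (4 * (1 - 2 * lam * c2))) := by
  have h1 : (2 * lam * c2 - 1) ≠ 0 := by linarith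
  have h2 : (1 - 2 * lam * c2) ≠ 0 := by linarith
  have h3 : lam ≠ 0 := ne_of_gt hlam
  field_simp
  ring

/-- Bounds on the optimized regret constant for the clean-first order (Lemma on
large noise ratio): for a sufficiently large ratio `Γ_N/Γ_C`, with
`σ = (Γ_C/Γ_N)²`, the infimum `G*` of
`G(c₂) = 4Γ_C²β^{2λc₂−1}/λ² + 4Γ_N²(1−β^{2λc₂−1})c₂²/(2λc₂−1)` over
`{c₂ : 0 < 2λc₂ < 1}` satisfies
`(4Γ_C²/(λ²β))·β^{8σ/β} ≤ G* ≤ (4Γ_C²/(λ²β))·β^{σ}·(1 + σ log(1/β)/4)`, and in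
particular `G* < 4Γ_C²/(λ²β)`, the bound from using the clean data alone. -/
theorem statement_18 (β : ℝ) (hβ : β ∈ Set.Ioo (0 : ℝ) 1) :
    ∃ R0 : ℝ, 0 < R0 ∧
      ∀ lam ΓC ΓN : ℝ, 0 < lam → 0 < ΓC → 0 < ΓN → R0 ≤ ΓN / ΓC →
        (4 * ΓC ^ 2 / (lam ^ 2 * β)) * β ^ (8 * (ΓC / ΓN) ^ 2 / β) ≤
          sInf ((fun c2 : ℝ =>
              4 * ΓC ^ 2 * β ^ (2 * lam * c2 - 1) / lam ^ 2 +
                4 * ΓN ^ 2 * (1 - β ^ (2 * lam * c2 - 1)) * c2 ^ 2 / (2 * lam * c2 - 1)) ''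
            {c2 : ℝ | 0 < 2 * lam * c2 ∧ 2 * lam * c2 < 1}) ∧
        sInf ((fun c2 : ℝ =>
              4 * ΓC ^ 2 * β ^ (2 * lam * c2 - 1) / lam ^ 2 +
                4 * ΓN ^ 2 * (1 - β ^ (2 * lam * c2 - 1)) * c2 ^ 2 / (2 * lam * c2 - 1)) ''
            {c2 : ℝ | 0 < 2 * lam * c2 ∧ 2 * lam * c2 < 1}) ≤
          (4 * ΓC ^ 2 / (lam ^ 2 * β)) * β ^ ((ΓC / ΓN) ^ 2) *
            (1 + (ΓC / ΓN) ^ 2 * Real.log (1 / β) / 4) ∧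
        sInf ((fun c2 : ℝ =>
              4 * ΓC ^ 2 * β ^ (2 * lam * c2 - 1) / lam ^ 2 +
                4 * ΓN ^ 2 * (1 - β ^ (2 * lam * c2 - 1)) * c2 ^ 2 / (2 * lam * c2 - 1)) ''
            {c2 : ℝ | 0 < 2 * lam * c2 ∧ 2 * lam * c2 < 1}) <
          4 * ΓC ^ 2 / (lam ^ 2 * β) := by
  obtain ⟨hβ0, hβ1⟩ := hβ
  refine ⟨2, two_pos, ?_⟩
  intro lam ΓC ΓN hlam hC hN hR
  have hNC : 2 * ΓC ≤ ΓN := by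
    have := (le_div_iff₀ hC).mp hR
    linarith
  have hσ0 : 0 < (ΓC / ΓN) ^ 2 := by positivity
  have hratio : ΓC / ΓN ≤ 1 / 2 := by
    rw [div_le_div_iff₀ hN (by norm_num : (0:ℝ) < 2)]
    linarith
  have hσ1 : (ΓC / ΓN) ^ 2 < 1 := by nlinarith [div_pos hC hN]
  have hlam2 : (0:ℝ) < 4 / lam ^ 2 := by positivity
  have hlamne : lam ≠ 0 := ne_of_gt hlam
  have hβne : β ≠ 0 := ne_of_gt hβ0
  -- the lower bound as a scaled quantity
  have hLBeq : (4 * ΓC ^ 2 / (lam ^ 2 * β)) * β ^ (8 * (ΓC / ΓN) ^ 2 / β) =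
      4 / lam ^ 2 * (ΓC ^ 2 * β ^ (8 * (ΓC / ΓN) ^ 2 / β - 1)) := by
    rw [Real.rpow_sub hβ0, Real.rpow_one]
    field_simp
  -- lower bound holds for every element of the image
  have hlow : ∀ y ∈ ((fun c2 : ℝ =>
        4 * ΓC ^ 2 * β ^ (2 * lam * c2 - 1) / lam ^ 2 +
          4 * ΓN ^ 2 * (1 - β ^ (2 * lam * c2 - 1)) * c2 ^ 2 / (2 * lam * c2 - 1)) ''
      {c2 : ℝ | 0 < 2 * lam * c2 ∧ 2 * lam * c2 < 1}),
      (4 * ΓC ^ 2 / (lam ^ 2 * β)) * β ^ (8 * (ΓC / ΓN) ^ 2 / β) ≤ y := by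
    rintro y ⟨c2, ⟨h0, h1⟩, rfl⟩
    have hb := bridge18 β ΓC ΓN lam c2 hlam h1
    calc (4 * ΓC ^ 2 / (lam ^ 2 * β)) * β ^ (8 * (ΓC / ΓN) ^ 2 / β)
        = 4 / lam ^ 2 * (ΓC ^ 2 * β ^ (8 * (ΓC / ΓN) ^ 2 / β - 1)) := hLBeq
      _ ≤ 4 / lam ^ 2 * (ΓC ^ 2 * β ^ (2 * lam * c2 - 1) +
            ΓN ^ 2 * (β ^ (2 * lam * c2 - 1) - 1) * (2 * lam * c2) ^ 2 /
              (4 * (1 - 2 * lam * c2))) :=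
          mul_le_mul_of_nonneg_left
            (lower_x β ΓC ΓN (2 * lam * c2) hβ0 hβ1 hC hN h0 h1) hlam2.le
      _ = _ := hb.symm
  -- the candidate point
  have hxs : 2 * lam * ((ΓC / ΓN) ^ 2 / (2 * lam)) = (ΓC / ΓN) ^ 2 := by
    field_simp
  have hmemD : ((ΓC / ΓN) ^ 2 / (2 * lam)) ∈
      {c2 : ℝ | 0 < 2 * lam * c2 ∧ 2 * lam * c2 < 1} := by
    constructor
    · rw [hxs]; exact hσ0
    · rw [hxs]; exact hσ1
  have hmem : (fun c2 : ℝ =>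
        4 * ΓC ^ 2 * β ^ (2 * lam * c2 - 1) / lam ^ 2 +
          4 * ΓN ^ 2 * (1 - β ^ (2 * lam * c2 - 1)) * c2 ^ 2 / (2 * lam * c2 - 1))
        ((ΓC / ΓN) ^ 2 / (2 * lam)) ∈ ((fun c2 : ℝ =>
        4 * ΓC ^ 2 * β ^ (2 * lam * c2 - 1) / lam ^ 2 +
          4 * ΓN ^ 2 * (1 - β ^ (2 * lam * c2 - 1)) * c2 ^ 2 / (2 * lam * c2 - 1)) ''
      {c2 : ℝ | 0 < 2 * lam * c2 ∧ 2 * lam * c2 < 1}) :=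
    Set.mem_image_of_mem _ hmemD
  have hne : ((fun c2 : ℝ =>
        4 * ΓC ^ 2 * β ^ (2 * lam * c2 - 1) / lam ^ 2 +
          4 * ΓN ^ 2 * (1 - β ^ (2 * lam * c2 - 1)) * c2 ^ 2 / (2 * lam * c2 - 1)) ''
      {c2 : ℝ | 0 < 2 * lam * c2 ∧ 2 * lam * c2 < 1}).Nonempty := ⟨_, hmem⟩
  have hbdd : BddBelow ((fun c2 : ℝ =>
        4 * ΓC ^ 2 * β ^ (2 * lam * c2 - 1) / lam ^ 2 +
          4 * ΓN ^ 2 * (1 - β ^ (2 * lam * c2 - 1)) * c2 ^ 2 / (2 * lam * c2 - 1)) ''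
      {c2 : ℝ | 0 < 2 * lam * c2 ∧ 2 * lam * c2 < 1}) :=
    ⟨_, fun y hy => hlow y hy⟩
  -- value at the candidate point is at most the upper bound
  have hval : (fun c2 : ℝ =>
        4 * ΓC ^ 2 * β ^ (2 * lam * c2 - 1) / lam ^ 2 +
          4 * ΓN ^ 2 * (1 - β ^ (2 * lam * c2 - 1)) * c2 ^ 2 / (2 * lam * c2 - 1))
        ((ΓC / ΓN) ^ 2 / (2 * lam)) ≤
      (4 * ΓC ^ 2 / (lam ^ 2 * β)) * β ^ ((ΓC / ΓN) ^ 2) *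
        (1 + (ΓC / ΓN) ^ 2 * Real.log (1 / β) / 4) := by
    show 4 * ΓC ^ 2 * β ^ (2 * lam * ((ΓC / ΓN) ^ 2 / (2 * lam)) - 1) / lam ^ 2 +
        4 * ΓN ^ 2 * (1 - β ^ (2 * lam * ((ΓC / ΓN) ^ 2 / (2 * lam)) - 1)) *
          ((ΓC / ΓN) ^ 2 / (2 * lam)) ^ 2 / (2 * lam * ((ΓC / ΓN) ^ 2 / (2 * lam)) - 1) ≤ _
    rw [hxs]
    have hu := upper_x β ΓC ΓN hβ0 hβ1 hC hN hσ1
    obtain ⟨σ, hσv⟩ : ∃ σ : ℝ, σ = (ΓC / ΓN) ^ 2 := ⟨_, rfl⟩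
    rw [← hσv] at hu ⊢
    have hσ1' : σ < 1 := hσv ▸ hσ1
    have hσ0' : 0 < σ := hσv ▸ hσ0
    have hne1 : σ - 1 ≠ 0 := by linarith
    have hne2 : (1 : ℝ) - σ ≠ 0 := by linarith
    have hBs : β ^ (σ - 1) * β = β ^ σ := by
      rw [Real.rpow_sub hβ0, Real.rpow_one, div_mul_cancel₀ _ hβne]
    rw [← hBs]
    obtain ⟨B, hB⟩ : ∃ B : ℝ, B = β ^ (σ - 1) := ⟨_, rfl⟩
    rw [← hB] at hu ⊢
    obtain ⟨L, hL⟩ : ∃ L : ℝ, L = Real.log (1 / β) := ⟨_, rfl⟩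
    rw [← hL] at hu ⊢
    calc 4 * ΓC ^ 2 * B / lam ^ 2 +
          4 * ΓN ^ 2 * (1 - B) * (σ / (2 * lam)) ^ 2 / (σ - 1)
        = 4 / lam ^ 2 * (ΓC ^ 2 * B + ΓN ^ 2 * (B - 1) * σ ^ 2 / (4 * (1 - σ))) := by
          field_simp
          ring
      _ ≤ 4 / lam ^ 2 * (ΓC ^ 2 * B * (1 + σ * L / 4)) :=
          mul_le_mul_of_nonneg_left hu hlam2.le
      _ = (4 * ΓC ^ 2 / (lam ^ 2 * β)) * (B * β) * (1 + σ * L / 4) := by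
          field_simp
  have hupper := (csInf_le hbdd hmem).trans hval
  have hstrict : (4 * ΓC ^ 2 / (lam ^ 2 * β)) * β ^ ((ΓC / ΓN) ^ 2) *
      (1 + (ΓC / ΓN) ^ 2 * Real.log (1 / β) / 4) < 4 * ΓC ^ 2 / (lam ^ 2 * β) := by
    have h := strict_x β ((ΓC / ΓN) ^ 2) hβ0 hβ1 hσ0
    have hcp : (0:ℝ) < 4 * ΓC ^ 2 / (lam ^ 2 * β) := by positivity
    calc (4 * ΓC ^ 2 / (lam ^ 2 * β)) * β ^ ((ΓC / ΓN) ^ 2) *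
          (1 + (ΓC / ΓN) ^ 2 * Real.log (1 / β) / 4)
        = (4 * ΓC ^ 2 / (lam ^ 2 * β)) *
            (β ^ ((ΓC / ΓN) ^ 2) * (1 + (ΓC / ΓN) ^ 2 * Real.log (1 / β) / 4)) := by ring
      _ < (4 * ΓC ^ 2 / (lam ^ 2 * β)) * 1 := mul_lt_mul_of_pos_left h hcp
      _ = 4 * ΓC ^ 2 / (lam ^ 2 * β) := mul_one _
  exact ⟨le_csInf hne hlow, hupper, lt_of_le_of_lt hupper hstrict⟩
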